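/- Let H₁ and H₂ be complex Hilbert spaces and h : ℝ → B(H₁,H₂) a map, continuous with respect to the operator norm, such that h(τ) is Fredholm of index 0 for every τ ∈ ℝ and h(τ) is bijective for all τ outside a finite set F ⊂ ℝ. Then there exists a compactly supported, operator-norm continuous map f : ℝ → B(H₁,H₂) such that f(τ) has finite rank for every τ and h(τ) − f(τ) is bijective for every τ ∈ ℝ. -/

import Mathlib

set_option linter.unusedSectionVars false

open ContinuousLinearMap Module Set

section AuxFredholmCorrection
variable {H₁ H₂ : Type*}
    [NormedAddCommGroup H₁] [InnerProductSpace ℂ H₁] [CompleteSpace H₁]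
    [NormedAddCommGroup H₂] [InnerProductSpace ℂ H₂] [CompleteSpace H₂]

lemma aux_countable_one_sub (A : H₁ →L[ℂ] H₁)
    (hA : FiniteDimensional ℂ (LinearMap.range (A : H₁ →ₗ[ℂ] H₁))) :
    {z : ℂ | ¬ Function.Bijective ⇑((1 : H₁ →L[ℂ] H₁) - z • A)}.Countable := by
  set V : Submodule ℂ H₁ := LinearMap.range (A : H₁ →ₗ[ℂ] H₁) with hV
  haveI : FiniteDimensional ℂ V := hA
  have hmemV : ∀ x : H₁, A x ∈ V := fun x => LinearMap.mem_range_self _ x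
  set B : V →ₗ[ℂ] V := (A : H₁ →ₗ[ℂ] H₁).restrict (fun x _ => hmemV x) with hB
  have hBapp : ∀ v : V, (B v : H₁) = A (v : H₁) := fun v => rfl
  have key : ∀ z : ℂ, ¬ Function.Bijective ⇑((1 : H₁ →L[ℂ] H₁) - z • A) →
      z ≠ 0 ∧ Module.End.HasEigenvalue B z⁻¹ := by
    intro z hz
    have happ : ∀ x : H₁, ((1 : H₁ →L[ℂ] H₁) - z • A) x = x - z • A x := by
      intro x; simp
    have hz0 : z ≠ 0 := by
      rintro rfl
      apply hz
      have : ∀ x : H₁, ((1 : H₁ →L[ℂ] H₁) - (0:ℂ) • A) x = x := by intro x; simp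
      exact ⟨fun x y hxy => by rw [← this x, ← this y, hxy], fun y => ⟨y, this y⟩⟩
    refine ⟨hz0, ?_⟩
    set glin : H₁ →ₗ[ℂ] H₁ := LinearMap.id - z • (A : H₁ →ₗ[ℂ] H₁) with hglin
    have hgl : ∀ x, glin x = x - z • A x := by intro x; simp [hglin]
    have hgV : ∀ x ∈ V, glin x ∈ V := fun x hx => by
      rw [hgl]; exact sub_mem hx (Submodule.smul_mem _ z (hmemV x))
    set gV : V →ₗ[ℂ] V := glin.restrict hgV with hgVdef
    have hgVapp : ∀ v : V, (gV v : H₁) = (v : H₁) - z • A (v : H₁) := fun v => by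
      rw [hgVdef]; exact hgl _
    have hnotinj : ¬ Function.Injective gV := by
      intro hinj
      have hsurj : Function.Surjective gV := (LinearMap.injective_iff_surjective).mp hinj
      apply hz
      constructor
      · intro x y hxy
        have hgx : x - z • A x = y - z • A y := by rw [← happ, ← happ, hxy]
        have hw : x - y = z • A (x - y) := by
          rw [map_sub, smul_sub]; exact sub_eq_sub_iff_sub_eq_sub.mp hgx
        have hwV : x - y ∈ V := by rw [hw]; exact Submodule.smul_mem _ z (hmemV _)
        have h0 : gV ⟨x - y, hwV⟩ = 0 := by
          apply Subtype.ext
          rw [hgVapp]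
          simpa [sub_eq_zero] using hw
        have := hinj (h0.trans (map_zero gV).symm)
        have : x - y = (0 : H₁) := congrArg Subtype.val this
        exact sub_eq_zero.mp this
      · intro y
        obtain ⟨v, hv⟩ := hsurj ⟨z • A y, Submodule.smul_mem _ z (hmemV y)⟩
        have hvc : (v : H₁) - z • A (v : H₁) = z • A y := by
          rw [← hgVapp, hv]
        refine ⟨y + (v : H₁), ?_⟩
        rw [happ, map_add, smul_add]
        calc y + (v:H₁) - (z • A y + z • A (v:H₁))
            = y + (((v:H₁) - z • A (v:H₁)) - z • A y) := by abel
          _ = y := by rw [hvc]; simp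
    have : LinearMap.ker gV ≠ ⊥ := fun hbot => hnotinj (LinearMap.ker_eq_bot.mp hbot)
    obtain ⟨v, hvker, hvne⟩ := (Submodule.ne_bot_iff _).mp this
    have hv0 : (v : H₁) - z • A (v : H₁) = 0 := by
      rw [← hgVapp, hvker]; rfl
    have hAv : A (v : H₁) = z⁻¹ • (v : H₁) := by
      rw [eq_comm, inv_smul_eq_iff₀ hz0]
      exact sub_eq_zero.mp hv0
    have hBv : B v = z⁻¹ • v := by
      apply Subtype.ext
      rw [hBapp, hAv]; rfl
    exact Module.End.hasEigenvalue_of_hasEigenvector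
      ⟨Module.End.mem_eigenspace_iff.mpr hBv, hvne⟩
  refine Set.Countable.mono ?_
    (((Module.End.finite_hasEigenvalue (B : Module.End ℂ V)).image Inv.inv).countable)
  intro z hz
  obtain ⟨hz0, heig⟩ := key z hz
  exact ⟨z⁻¹, heig, inv_inv z⟩

lemma aux_exists_corrector (T : H₁ →L[ℂ] H₂)
    (h1 : FiniteDimensional ℂ (LinearMap.ker (T : H₁ →ₗ[ℂ] H₂)))
    (h2 : IsClosed (LinearMap.range (T : H₁ →ₗ[ℂ] H₂) : Set H₂))
    (h3 : FiniteDimensional ℂ (H₂ ⧸ LinearMap.range (T : H₁ →ₗ[ℂ] H₂)))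
    (h4 : (Module.finrank ℂ (LinearMap.ker (T : H₁ →ₗ[ℂ] H₂)) : ℤ) =
      Module.finrank ℂ (H₂ ⧸ LinearMap.range (T : H₁ →ₗ[ℂ] H₂))) :
    ∃ S : H₁ →L[ℂ] H₂, FiniteDimensional ℂ (LinearMap.range (S : H₁ →ₗ[ℂ] H₂)) ∧
      Function.Bijective ⇑(T - S) := by
  set K : Submodule ℂ H₁ := LinearMap.ker (T : H₁ →ₗ[ℂ] H₂) with hK
  set R : Submodule ℂ H₂ := LinearMap.range (T : H₁ →ₗ[ℂ] H₂) with hR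
  haveI : FiniteDimensional ℂ K := h1
  haveI : CompleteSpace R := h2.completeSpace_coe
  haveI : FiniteDimensional ℂ (H₂ ⧸ R) := h3
  haveI : FiniteDimensional ℂ Rᗮ :=
    (Submodule.quotientEquivOfIsCompl R Rᗮ
      Submodule.isCompl_orthogonal_of_hasOrthogonalProjection).finiteDimensional
  have hfr : Module.finrank ℂ K = Module.finrank ℂ Rᗮ := by
    have h5 : Module.finrank ℂ (H₂ ⧸ R) = Module.finrank ℂ Rᗮ :=
      (Submodule.quotientEquivOfIsCompl R Rᗮ
        Submodule.isCompl_orthogonal_of_hasOrthogonalProjection).finrank_eq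
    have hZ : (Module.finrank ℂ K : ℤ) = (Module.finrank ℂ Rᗮ : ℤ) := by rw [h4, h5]
    exact_mod_cast hZ
  obtain ⟨u⟩ := FiniteDimensional.nonempty_linearEquiv_of_finrank_eq hfr
  set uc : K →L[ℂ] Rᗮ := LinearMap.toContinuousLinearMap u.toLinearMap with huc
  set P : H₁ →L[ℂ] K := K.orthogonalProjectionOnto with hP
  set S : H₁ →L[ℂ] H₂ := Rᗮ.subtypeL.comp (uc.comp P) with hS
  have hSapp : ∀ x : H₁, S x = (u (P x) : H₂) := fun x => rfl
  have hSmem : ∀ x : H₁, S x ∈ Rᗮ := fun x => (u (P x)).2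
  have hPK : ∀ x : H₁, x ∈ K → (P x : H₁) = x := by
    intro x hx
    rw [hP]
    exact Submodule.starProjection_eq_self_iff.mpr hx
  refine ⟨S, ?_, ?_, ?_⟩
  · -- finite rank
    have : LinearMap.range (S : H₁ →ₗ[ℂ] H₂) ≤ Rᗮ := by
      rintro y ⟨x, rfl⟩; exact hSmem x
    exact Submodule.finiteDimensional_of_le this
  · -- injective
    intro x y hxy
    have hxy' : T (x - y) = S (x - y) := by
      have h0 : (T - S) (x - y) = 0 := by rw [map_sub, hxy, sub_self]
      rw [ContinuousLinearMap.sub_apply] at h0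
      exact sub_eq_zero.mp h0
    set w := x - y with hw
    have hTR : T w ∈ R := LinearMap.mem_range_self _ w
    have hTperp : T w ∈ Rᗮ := hxy' ▸ hSmem w
    have hT0 : T w = 0 := by
      have := Submodule.inner_left_of_mem_orthogonal hTR hTperp
      simpa [inner_self_eq_zero] using this
    have hwK : w ∈ K := LinearMap.mem_ker.mpr hT0
    have hS0 : S w = 0 := by rw [← hxy', hT0]
    have : (u (P w) : H₂) = 0 := by rw [← hSapp, hS0]
    have hPw0 : u (P w) = 0 := Subtype.ext (by simpa using this)
    have : P w = 0 := u.injective (by simpa using hPw0)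
    have : (P w : H₁) = 0 := by rw [this]; rfl
    rw [hPK w hwK] at this
    exact sub_eq_zero.mp (hw ▸ this)
  · -- surjective
    intro y
    set yR : H₂ := (R.orthogonalProjectionOnto y : H₂) with hyR
    have hyRmem : yR ∈ R := (R.orthogonalProjectionOnto y).2
    have hyPmem : y - yR ∈ Rᗮ := Submodule.sub_starProjection_mem_orthogonal y
    obtain ⟨x₁, hx₁⟩ := hyRmem
    set x₂ : H₁ := x₁ - (P x₁ : H₁) with hx₂
    have hTx₂ : T x₂ = yR := by
      have hPker : T ((P x₁ : H₁)) = 0 := LinearMap.mem_ker.mp (P x₁).2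
      rw [hx₂, map_sub, hPker, sub_zero]; exact hx₁
    have hPx₂ : P x₂ = 0 := by
      have : (P ((P x₁ : H₁))) = P x₁ := by
        apply Subtype.ext
        rw [hPK _ (P x₁).2]
      rw [hx₂, map_sub, this, sub_self]
    set k : K := u.symm ⟨-(y - yR), neg_mem hyPmem⟩ with hk
    refine ⟨x₂ + (k : H₁), ?_⟩
    have hPk : P (k : H₁) = k := Subtype.ext (hPK _ k.2)
    have hTk : T (k : H₁) = 0 := LinearMap.mem_ker.mp k.2
    have hSx₂ : S x₂ = 0 := by rw [hSapp, hPx₂]; simp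
    have hSk : S (k : H₁) = -(y - yR) := by
      rw [hSapp, hPk, hk]
      rw [u.apply_symm_apply]
    rw [ContinuousLinearMap.sub_apply, map_add, map_add, hTx₂, hTk, hSx₂, hSk]
    abel

lemma aux_mem_inv_iff (f : H₁ →L[ℂ] H₂) :
    f ∈ Set.range ((↑) : (H₁ ≃L[ℂ] H₂) → H₁ →L[ℂ] H₂) ↔ Function.Bijective f := by
  constructor
  · rintro ⟨e, rfl⟩
    exact e.bijective
  · intro hf
    exact ⟨ContinuousLinearEquiv.ofBijective f (LinearMap.ker_eq_bot.mpr hf.1)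
      (LinearMap.range_eq_top.mpr hf.2), rfl⟩

-- countable bad set, packaged for an invertible base point
lemma aux_countable_bad (e : H₁ ≃L[ℂ] H₂) (S : H₁ →L[ℂ] H₂)
    (hS : FiniteDimensional ℂ (LinearMap.range (S : H₁ →ₗ[ℂ] H₂))) :
    {z : ℂ | ¬ Function.Bijective ⇑((e : H₁ →L[ℂ] H₂) - z • S)}.Countable := by
  set A : H₁ →L[ℂ] H₁ := (e.symm : H₂ →L[ℂ] H₁).comp S with hA
  have hAfd : FiniteDimensional ℂ (LinearMap.range (A : H₁ →ₗ[ℂ] H₁)) := by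
    have : (LinearMap.range (A : H₁ →ₗ[ℂ] H₁)) =
        Submodule.map ((e.symm : H₂ →L[ℂ] H₁) : H₂ →ₗ[ℂ] H₁) (LinearMap.range (S : H₁ →ₗ[ℂ] H₂)) := by
      rw [hA]
      ext x
      simp only [LinearMap.mem_range, Submodule.mem_map, ContinuousLinearMap.coe_comp',
        Function.comp_apply, ContinuousLinearMap.coe_coe]
      constructor
      · rintro ⟨y, rfl⟩; exact ⟨S y, ⟨y, rfl⟩, rfl⟩
      · rintro ⟨w, ⟨y, rfl⟩, rfl⟩; exact ⟨y, rfl⟩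
    rw [this]
    exact Module.Finite.map _ _
  have hiff : ∀ z : ℂ, Function.Bijective ⇑((e : H₁ →L[ℂ] H₂) - z • S) ↔
      Function.Bijective ⇑((1 : H₁ →L[ℂ] H₁) - z • A) := by
    intro z
    have hcomp : ⇑((e : H₁ →L[ℂ] H₂) - z • S) = ⇑e ∘ ⇑((1 : H₁ →L[ℂ] H₁) - z • A) := by
      ext x
      simp only [Function.comp_apply, ContinuousLinearMap.sub_apply,
        ContinuousLinearMap.smul_apply, ContinuousLinearMap.one_apply,
        ContinuousLinearMap.coe_comp', Function.comp_apply, hA,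
        ContinuousLinearEquiv.coe_coe]
      rw [map_sub, map_smul, e.apply_symm_apply]
    rw [hcomp]
    exact Function.Bijective.of_comp_iff' e.bijective _
  have : {z : ℂ | ¬ Function.Bijective ⇑((e : H₁ →L[ℂ] H₂) - z • S)} =
      {z : ℂ | ¬ Function.Bijective ⇑((1 : H₁ →L[ℂ] H₁) - z • A)} := by
    ext z
    simp only [Set.mem_setOf_eq]
    exact not_congr (hiff z)
  rw [this]
  exact aux_countable_one_sub A hAfd

lemma aux_range_sum_fd {α : Type*} (s : Finset α) (g : α → H₁ →L[ℂ] H₂)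
    (hg : ∀ a ∈ s, FiniteDimensional ℂ (LinearMap.range ((g a) : H₁ →ₗ[ℂ] H₂))) :
    FiniteDimensional ℂ (LinearMap.range ((∑ a ∈ s, g a : H₁ →L[ℂ] H₂) : H₁ →ₗ[ℂ] H₂)) := by
  classical
  induction s using Finset.induction_on with
  | empty =>
    rw [Finset.sum_empty]
    have : LinearMap.range ((0 : H₁ →L[ℂ] H₂) : H₁ →ₗ[ℂ] H₂) = ⊥ := LinearMap.range_zero
    rw [this]
    infer_instance
  | insert a t hnotmem ih =>
    rw [Finset.sum_insert hnotmem]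
    haveI h1 : FiniteDimensional ℂ (LinearMap.range ((g a) : H₁ →ₗ[ℂ] H₂)) := hg a (Finset.mem_insert_self a t)
    haveI h2 : FiniteDimensional ℂ (LinearMap.range ((∑ b ∈ t, g b : H₁ →L[ℂ] H₂) : H₁ →ₗ[ℂ] H₂)) :=
      ih fun b hb => hg b (Finset.mem_insert_of_mem hb)
    have hle : LinearMap.range ((g a + ∑ b ∈ t, g b : H₁ →L[ℂ] H₂) : H₁ →ₗ[ℂ] H₂) ≤
        LinearMap.range ((g a) : H₁ →ₗ[ℂ] H₂) ⊔ LinearMap.range ((∑ b ∈ t, g b : H₁ →L[ℂ] H₂) : H₁ →ₗ[ℂ] H₂) := by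
      rintro y ⟨x, rfl⟩
      exact Submodule.add_mem_sup (LinearMap.mem_range_self _ x) (LinearMap.mem_range_self _ x)
    exact Submodule.finiteDimensional_of_le hle


lemma aux_local (h : ℝ → H₁ →L[ℂ] H₂) (hcont : Continuous h) (p r : ℝ) (hr : 0 < r)
    (h1 : FiniteDimensional ℂ (LinearMap.ker ((h p) : H₁ →ₗ[ℂ] H₂)))
    (h2 : IsClosed (LinearMap.range ((h p) : H₁ →ₗ[ℂ] H₂) : Set H₂))
    (h3 : FiniteDimensional ℂ (H₂ ⧸ LinearMap.range ((h p) : H₁ →ₗ[ℂ] H₂)))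
    (h4 : (Module.finrank ℂ (LinearMap.ker ((h p) : H₁ →ₗ[ℂ] H₂)) : ℤ) =
      Module.finrank ℂ (H₂ ⧸ LinearMap.range ((h p) : H₁ →ₗ[ℂ] H₂)))
    (hinv : ∀ τ : ℝ, 0 < |τ - p| → |τ - p| ≤ r → Function.Bijective ⇑(h τ)) :
    ∃ fp : ℝ → H₁ →L[ℂ] H₂, Continuous fp ∧
      (∀ τ, FiniteDimensional ℂ (LinearMap.range ((fp τ) : H₁ →ₗ[ℂ] H₂))) ∧
      (∀ τ, r < |τ - p| → fp τ = 0) ∧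
      (∀ τ, |τ - p| ≤ r → Function.Bijective ⇑(h τ - fp τ)) := by
  obtain ⟨S, hSfd, hSbij⟩ := aux_exists_corrector (h p) h1 h2 h3 h4
  set Inv : Set (H₁ →L[ℂ] H₂) := Set.range ((↑) : (H₁ ≃L[ℂ] H₂) → H₁ →L[ℂ] H₂) with hInv
  have hInvOpen : IsOpen Inv := ContinuousLinearEquiv.isOpen
  -- the joint continuous map
  set Φ : ℝ × ℂ → (H₁ →L[ℂ] H₂) := fun q => h q.1 - q.2 • S with hΦdef
  have hΦ : Continuous Φ := (hcont.comp continuous_fst).sub (continuous_snd.smul continuous_const)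
  set O : Set (ℝ × ℂ) := Φ ⁻¹' Inv with hO
  have hOopen : IsOpen O := hInvOpen.preimage hΦ
  have hmemO : ((p : ℝ), (1 : ℂ)) ∈ O := by
    have : Φ (p, 1) = h p - S := by simp [hΦdef]
    rw [Set.mem_preimage, this, hInv, aux_mem_inv_iff]
    exact hSbij
  obtain ⟨ε', hε', hball'⟩ := Metric.isOpen_iff.mp hOopen _ hmemO
  set ε : ℝ := min (ε' / 2) (r / 2) with hε
  have hεpos : 0 < ε := lt_min (by linarith) (by linarith)
  have hεr : ε ≤ r / 2 := min_le_right _ _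
  have hball : ∀ τ : ℝ, |τ - p| ≤ ε → (h τ - S) ∈ Inv := by
    intro τ hτ
    have hd : dist ((τ, (1:ℂ))) ((p, (1:ℂ))) < ε' := by
      rw [Prod.dist_eq]
      simp only [dist_self]
      rw [max_eq_left dist_nonneg, Real.dist_eq]
      have hεε' : ε ≤ ε' / 2 := min_le_left _ _
      calc |τ - p| ≤ ε := hτ
        _ < ε' := by linarith
    have hmem := hball' hd
    rw [hO, Set.mem_preimage] at hmem
    simpa [hΦdef] using hmem
  -- one-sided tube construction at the edge points  p ± ε
  have side : ∀ τ₀ : ℝ, |τ₀ - p| = ε → ∃ (γ : Path (1:ℂ) (0:ℂ)) (η : ℝ), 0 < η ∧ η ≤ r - ε ∧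
      ∀ τ : ℝ, |τ - τ₀| ≤ η → ∀ t : unitInterval, (h τ - γ t • S) ∈ Inv := by
    intro τ₀ hτ₀
    have h0 : 0 < |τ₀ - p| := by rw [hτ₀]; exact hεpos
    have hbij0 : Function.Bijective ⇑(h τ₀) := hinv τ₀ h0 (by rw [hτ₀]; linarith)
    obtain ⟨e, he⟩ := (aux_mem_inv_iff (h τ₀)).mpr hbij0
    have hbad : {z : ℂ | ¬ Function.Bijective ⇑(h τ₀ - z • S)}.Countable := by
      rw [← he]
      exact aux_countable_bad e S hSfd
    have hpc : IsPathConnected {z : ℂ | ¬ Function.Bijective ⇑(h τ₀ - z • S)}ᶜ :=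
      hbad.isPathConnected_compl_of_one_lt_rank
        (by rw [Complex.rank_real_complex]; norm_num)
    have h1mem : (1:ℂ) ∈ {z : ℂ | ¬ Function.Bijective ⇑(h τ₀ - z • S)}ᶜ := by
      rw [Set.mem_compl_iff, Set.mem_setOf_eq, not_not, one_smul]
      exact (aux_mem_inv_iff _).mp (hball τ₀ (le_of_eq hτ₀))
    have h0mem : (0:ℂ) ∈ {z : ℂ | ¬ Function.Bijective ⇑(h τ₀ - z • S)}ᶜ := by
      rw [Set.mem_compl_iff, Set.mem_setOf_eq, not_not, zero_smul, sub_zero]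
      exact hbij0
    obtain ⟨γ, hγ⟩ := hpc.joinedIn 1 h1mem 0 h0mem
    have hL : IsCompact (Set.range ⇑γ) := isCompact_range γ.continuous
    have hsub : ({τ₀} ×ˢ Set.range ⇑γ : Set (ℝ × ℂ)) ⊆ O := by
      rintro ⟨a, z⟩ ⟨ha, hz⟩
      obtain ⟨t, rfl⟩ := hz
      rcases Set.mem_singleton_iff.mp ha
      have := hγ t
      rw [Set.mem_compl_iff, Set.mem_setOf_eq, not_not] at this
      rw [hO, Set.mem_preimage, hInv]
      exact (aux_mem_inv_iff _).mpr this
    obtain ⟨U, V, hUopen, _, hU, hV, hUV⟩ :=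
      generalized_tube_lemma isCompact_singleton hL hOopen hsub
    obtain ⟨η', hη', hballU⟩ := Metric.isOpen_iff.mp hUopen τ₀ (hU rfl)
    refine ⟨γ, min (η' / 2) (r - ε), lt_min (by linarith) (by linarith), min_le_right _ _, ?_⟩
    intro τ hτ t
    have hτU : τ ∈ U := by
      apply hballU
      rw [Metric.mem_ball, Real.dist_eq]
      have : |τ - τ₀| ≤ η' / 2 := le_trans hτ (min_le_left _ _)
      linarith
    have : (τ, γ t) ∈ O := hUV ⟨hτU, hV (Set.mem_range_self t)⟩
    rw [hO, Set.mem_preimage] at this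
    simpa [hΦdef] using this
  obtain ⟨γp, ηp, hηp, hηpr, htubep⟩ := side (p + ε) (by rw [add_sub_cancel_left]; exact abs_of_pos hεpos)
  obtain ⟨γm, ηm, hηm, hηmr, htubem⟩ := side (p - ε) (by rw [sub_sub_cancel_left, abs_neg]; exact abs_of_pos hεpos)
  set ψ : ℝ → ℂ := fun τ =>
    if p ≤ τ then γp.extend ((τ - (p + ε)) / ηp) else γm.extend (((p - ε) - τ) / ηm) with hψdef
  have hψcont : Continuous ψ := by
    apply Continuous.if_le
    · exact γp.continuous_extend.comp ((continuous_id.sub continuous_const).div_const _)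
    · exact γm.continuous_extend.comp ((continuous_const.sub continuous_id).div_const _)
    · exact continuous_const
    · exact continuous_id
    · intro τ hτ
      rcases hτ
      rw [Path.extend_of_le_zero _ (by apply div_nonpos_of_nonpos_of_nonneg <;> linarith),
        Path.extend_of_le_zero _ (by apply div_nonpos_of_nonpos_of_nonneg <;> linarith)]
  refine ⟨fun τ => ψ τ • S, hψcont.smul continuous_const, ?_, ?_, ?_⟩
  · -- finite rank
    intro τ
    show FiniteDimensional ℂ (LinearMap.range ((ψ τ • S) : H₁ →ₗ[ℂ] H₂))
    have hle : LinearMap.range ((ψ τ • S) : H₁ →ₗ[ℂ] H₂) ≤ LinearMap.range (S : H₁ →ₗ[ℂ] H₂) := by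
      rintro y ⟨x, rfl⟩
      exact ⟨ψ τ • x, by simp⟩
    exact Submodule.finiteDimensional_of_le hle
  · -- vanishing outside the window
    intro τ hτ
    show ψ τ • S = 0
    rcases le_or_gt p τ with hpτ | hpτ
    · have habs : τ - p = |τ - p| := (abs_of_nonneg (by linarith)).symm
      have : ψ τ = 0 := by
        rw [hψdef]
        simp only [if_pos hpτ]
        apply Path.extend_of_one_le
        rw [le_div_iff₀ hηp, one_mul]
        have : r < τ - p := by rw [habs]; exact hτ
        linarith
      rw [this, zero_smul]
    · have habs : p - τ = |τ - p| := by rw [abs_sub_comm]; exact (abs_of_pos (by linarith)).symm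
      have : ψ τ = 0 := by
        rw [hψdef]
        simp only [if_neg (not_le.mpr hpτ)]
        apply Path.extend_of_one_le
        rw [le_div_iff₀ hηm, one_mul]
        have : r < p - τ := by rw [habs]; exact hτ
        linarith
      rw [this, zero_smul]
  · -- bijectivity on the window
    intro τ hτ
    show Function.Bijective ⇑(h τ - ψ τ • S)
    rcases le_or_gt p τ with hpτ | hpτ
    · have habs : |τ - p| = τ - p := abs_of_nonneg (by linarith)
      rcases le_or_gt τ (p + ε) with hτε | hτε
      · have hψ1 : ψ τ = 1 := by
          rw [hψdef]
          simp only [if_pos hpτ]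
          apply Path.extend_of_le_zero
          apply div_nonpos_of_nonpos_of_nonneg <;> linarith
        rw [hψ1, one_smul]
        exact (aux_mem_inv_iff _).mp (hball τ (by rw [habs]; linarith))
      · rcases le_or_gt τ (p + ε + ηp) with hτη | hτη
        · have h0u : 0 ≤ (τ - (p + ε)) / ηp := div_nonneg (by linarith) hηp.le
          have h1u : (τ - (p + ε)) / ηp ≤ 1 := by
            rw [div_le_one hηp]; linarith
          have hψγ : ψ τ = γp ⟨(τ - (p + ε)) / ηp, h0u, h1u⟩ := by
            rw [hψdef]
            simp only [if_pos hpτ]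
            exact γp.extend_apply ⟨h0u, h1u⟩
          rw [hψγ]
          refine (aux_mem_inv_iff _).mp (htubep τ ?_ _)
          rw [abs_of_nonneg (by linarith)]
          linarith
        · have hψ0 : ψ τ = 0 := by
            rw [hψdef]
            simp only [if_pos hpτ]
            apply Path.extend_of_one_le
            rw [le_div_iff₀ hηp, one_mul]
            linarith
          rw [hψ0, zero_smul, sub_zero]
          exact hinv τ (by rw [habs]; linarith) (by rw [habs]; linarith)
    · have habs : |τ - p| = p - τ := by rw [abs_sub_comm]; exact abs_of_pos (by linarith)
      rcases le_or_gt (p - ε) τ with hτε | hτε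
      · have hψ1 : ψ τ = 1 := by
          rw [hψdef]
          simp only [if_neg (not_le.mpr hpτ)]
          apply Path.extend_of_le_zero
          apply div_nonpos_of_nonpos_of_nonneg <;> linarith
        rw [hψ1, one_smul]
        exact (aux_mem_inv_iff _).mp (hball τ (by rw [habs]; linarith))
      · rcases le_or_gt (p - ε - ηm) τ with hτη | hτη
        · have h0u : 0 ≤ ((p - ε) - τ) / ηm := div_nonneg (by linarith) hηm.le
          have h1u : ((p - ε) - τ) / ηm ≤ 1 := by
            rw [div_le_one hηm]; linarith
          have hψγ : ψ τ = γm ⟨((p - ε) - τ) / ηm, h0u, h1u⟩ := by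
            rw [hψdef]
            simp only [if_neg (not_le.mpr hpτ)]
            exact γm.extend_apply ⟨h0u, h1u⟩
          rw [hψγ]
          refine (aux_mem_inv_iff _).mp (htubem τ ?_ _)
          rw [abs_sub_comm, abs_of_nonneg (by linarith)]
          linarith
        · have hψ0 : ψ τ = 0 := by
            rw [hψdef]
            simp only [if_neg (not_le.mpr hpτ)]
            apply Path.extend_of_one_le
            rw [le_div_iff₀ hηm, one_mul]
            linarith
          rw [hψ0, zero_smul, sub_zero]
          exact hinv τ (by rw [habs]; linarith) (by rw [habs]; linarith)

theorem fredholm_family_finite_rank_correction_on_line'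
    (h : ℝ → H₁ →L[ℂ] H₂) (hcont : Continuous h)
    (hker : ∀ τ : ℝ, FiniteDimensional ℂ (LinearMap.ker ((h τ) : H₁ →ₗ[ℂ] H₂)))
    (hclosed : ∀ τ : ℝ, IsClosed (LinearMap.range ((h τ) : H₁ →ₗ[ℂ] H₂) : Set H₂))
    (hcoker : ∀ τ : ℝ, FiniteDimensional ℂ (H₂ ⧸ LinearMap.range ((h τ) : H₁ →ₗ[ℂ] H₂)))
    (hind : ∀ τ : ℝ, (Module.finrank ℂ (LinearMap.ker ((h τ) : H₁ →ₗ[ℂ] H₂)) : ℤ) =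
      Module.finrank ℂ (H₂ ⧸ LinearMap.range ((h τ) : H₁ →ₗ[ℂ] H₂)))
    (F : Set ℝ) (hF : F.Finite)
    (hbij : ∀ τ : ℝ, τ ∉ F → Function.Bijective (h τ)) :
    ∃ f : ℝ → H₁ →L[ℂ] H₂, Continuous f ∧ HasCompactSupport f ∧
      (∀ τ : ℝ, FiniteDimensional ℂ (LinearMap.range ((f τ) : H₁ →ₗ[ℂ] H₂))) ∧
      ∀ τ : ℝ, Function.Bijective (h τ - f τ) := by
  classical
  -- separation radii
  have hrad : ∀ p : ℝ, ∃ rp : ℝ, 0 < rp ∧ ∀ q ∈ F, q ≠ p → 3 * rp ≤ |p - q| := by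
    intro p
    rcases Set.eq_empty_or_nonempty (F \ {p}) with hFD | hFD
    · refine ⟨1, one_pos, fun q hq hqp => absurd ?_ (Set.eq_empty_iff_forall_notMem.mp hFD q)⟩
      exact ⟨hq, hqp⟩
    · obtain ⟨a, ⟨haF, hap⟩, hmin⟩ :=
        Set.exists_min_image (F \ {p}) (fun q => |p - q|) hF.diff hFD
      have hpa : 0 < |p - a| := by
        rw [abs_pos, sub_ne_zero]
        exact fun hc => hap (by rw [Set.mem_singleton_iff, ← hc])
      refine ⟨|p - a| / 3, by linarith, fun q hq hqp => ?_⟩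
      have := hmin q ⟨hq, hqp⟩
      linarith
  choose r hrpos hsep using hrad
  -- local corrections
  have hloc : ∀ p : ℝ, ∃ fp : ℝ → H₁ →L[ℂ] H₂, Continuous fp ∧
      (∀ τ, FiniteDimensional ℂ (LinearMap.range ((fp τ) : H₁ →ₗ[ℂ] H₂))) ∧
      (∀ τ, r p < |τ - p| → fp τ = 0) ∧
      (p ∈ F → ∀ τ, |τ - p| ≤ r p → Function.Bijective ⇑(h τ - fp τ)) := by
    intro p
    by_cases hp : p ∈ F
    · have hinv : ∀ τ : ℝ, 0 < |τ - p| → |τ - p| ≤ r p → Function.Bijective ⇑(h τ) := by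
        intro τ hτ0 hτr
        apply hbij
        intro hτF
        have hτp : τ ≠ p := by
          intro hc; rw [hc, sub_self, abs_zero] at hτ0; exact lt_irrefl 0 hτ0
        have h1 := hsep p τ hτF hτp
        rw [abs_sub_comm] at h1
        have := hrpos p
        linarith
      obtain ⟨fp, hc, hfd, hz, hb⟩ :=
        aux_local h hcont p (r p) (hrpos p) (hker p) (hclosed p) (hcoker p) (hind p) hinv
      exact ⟨fp, hc, hfd, hz, fun _ => hb⟩
    · refine ⟨0, continuous_const, ?_, fun τ _ => rfl, fun hc => absurd hc hp⟩
      intro τ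
      have : LinearMap.range (((0 : ℝ → H₁ →L[ℂ] H₂) τ) : H₁ →ₗ[ℂ] H₂) = ⊥ := LinearMap.range_zero
      rw [this]
      infer_instance
  choose fp hfpc hfpfd hfpz hfpb using hloc
  set Fs : Finset ℝ := hF.toFinset with hFs
  refine ⟨fun τ => ∑ p ∈ Fs, fp p τ, ?_, ?_, ?_, ?_⟩
  · exact continuous_finset_sum _ fun p _ => hfpc p
  · apply HasCompactSupport.intro (K := ⋃ p ∈ (Fs : Set ℝ), Set.Icc (p - r p) (p + r p))
    · exact Set.Finite.isCompact_biUnion Fs.finite_toSet fun p _ => isCompact_Icc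
    · intro τ hτ
      apply Finset.sum_eq_zero
      intro p hp
      apply hfpz p τ
      by_contra hcon
      push_neg at hcon
      apply hτ
      apply Set.mem_biUnion (Finset.mem_coe.mpr hp)
      rw [Set.mem_Icc]
      rw [abs_le] at hcon
      constructor <;> linarith [hcon.1, hcon.2]
  · intro τ
    exact aux_range_sum_fd Fs (fun p => fp p τ) fun p _ => hfpfd p τ
  · intro τ
    show Function.Bijective ⇑(h τ - ∑ q ∈ Fs, fp q τ)
    by_cases hcase : ∃ p ∈ F, |τ - p| ≤ r p
    · obtain ⟨p, hpF, hpτ⟩ := hcase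
      have hsum : (∑ q ∈ Fs, fp q τ) = fp p τ := by
        apply Finset.sum_eq_single_of_mem p (hF.mem_toFinset.mpr hpF)
        intro q hq hqp
        apply hfpz q τ
        by_contra hcon
        push_neg at hcon
        have hqF : q ∈ F := hF.mem_toFinset.mp hq
        have h1 := hsep p q hqF hqp
        have h2 := hsep q p hpF (Ne.symm hqp)
        have h3 : |p - q| ≤ |p - τ| + |τ - q| := abs_sub_le p τ q
        rw [abs_sub_comm p τ] at h3
        rw [abs_sub_comm q p] at h2
        have := hrpos p
        have := hrpos q
        linarith
      rw [hsum]
      exact hfpb p hpF τ hpτ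
    · push_neg at hcase
      have hsum : (∑ q ∈ Fs, fp q τ) = 0 := by
        apply Finset.sum_eq_zero
        intro q hq
        exact hfpz q τ (hcase q (hF.mem_toFinset.mp hq))
      rw [hsum, sub_zero]
      apply hbij
      intro hτF
      have := hcase τ hτF
      rw [sub_self, abs_zero] at this
      exact absurd this (not_lt.mpr (hrpos τ).le)

end AuxFredholmCorrection

/-- A norm-continuous family of Fredholm operators of index `0` on the real line, bijective
outside a finite set, can be corrected by a compactly supported, norm-continuous family of
finite-rank operators so as to become bijective everywhere. -/
theorem fredholm_family_finite_rank_correction_on_line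
    {H₁ H₂ : Type*}
    [NormedAddCommGroup H₁] [InnerProductSpace ℂ H₁] [CompleteSpace H₁]
    [NormedAddCommGroup H₂] [InnerProductSpace ℂ H₂] [CompleteSpace H₂]
    (h : ℝ → H₁ →L[ℂ] H₂) (hcont : Continuous h)
    (hker : ∀ τ : ℝ, FiniteDimensional ℂ (LinearMap.ker ((h τ) : H₁ →ₗ[ℂ] H₂)))
    (hclosed : ∀ τ : ℝ, IsClosed (LinearMap.range ((h τ) : H₁ →ₗ[ℂ] H₂) : Set H₂))
    (hcoker : ∀ τ : ℝ, FiniteDimensional ℂ (H₂ ⧸ LinearMap.range ((h τ) : H₁ →ₗ[ℂ] H₂)))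
    (hind : ∀ τ : ℝ, (Module.finrank ℂ (LinearMap.ker ((h τ) : H₁ →ₗ[ℂ] H₂)) : ℤ) =
      Module.finrank ℂ (H₂ ⧸ LinearMap.range ((h τ) : H₁ →ₗ[ℂ] H₂)))
    (F : Set ℝ) (hF : F.Finite)
    (hbij : ∀ τ : ℝ, τ ∉ F → Function.Bijective (h τ)) :
    ∃ f : ℝ → H₁ →L[ℂ] H₂, Continuous f ∧ HasCompactSupport f ∧
      (∀ τ : ℝ, FiniteDimensional ℂ (LinearMap.range ((f τ) : H₁ →ₗ[ℂ] H₂))) ∧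
      ∀ τ : ℝ, Function.Bijective (h τ - f τ) := by
  exact fredholm_family_finite_rank_correction_on_line' h hcont hker hclosed hcoker hind F hF hbij
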